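/- Let C be a cartesian monoidal category (the tensor product is the categorical product and the unit 𝟙 is a terminal object). If A is a separable monoid object in C, then the unique morphism A ⟶ 𝟙 is an isomorphism; in other words, the only separable monoid object in a cartesian monoidal category is the terminal one. -/

import Mathlib

open CategoryTheory MonoidalCategory

/-- A monoid object `A` in a monoidal category is *separable* if its multiplication
`μ : A ⊗ A ⟶ A` admits a section `σ : A ⟶ A ⊗ A` which is a morphism of
`A`-bimodule objects from `A` to the free bimodule `A ⊗ A`. -/
def Mon_.IsSeparable {C : Type*} [Category C] [MonoidalCategory C] (A : Mon C) : Prop :=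
  ∃ σ : A.X ⟶ A.X ⊗ A.X,
    σ ≫ MonObj.mul (X := A.X) = 𝟙 A.X ∧
    MonObj.mul (X := A.X) ≫ σ = (A.X ◁ σ) ≫ (α_ A.X A.X A.X).inv ≫ (MonObj.mul (X := A.X) ▷ A.X) ∧
    MonObj.mul (X := A.X) ≫ σ = (σ ▷ A.X) ≫ (α_ A.X A.X A.X).hom ≫ (A.X ◁ MonObj.mul (X := A.X))

/-- In a cartesian monoidal category, the only separable monoid object is the terminal
one: the unique morphism from a separable monoid object to the unit is an isomorphism. -/
theorem Mon_.IsSeparable.isIso_toUnit {C : Type*} [Category C] [CartesianMonoidalCategory C]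
    (A : Mon C) (hA : Mon_.IsSeparable A) :
    IsIso (SemiCartesianMonoidalCategory.toUnit A.X) := by
  open CartesianMonoidalCategory SemiCartesianMonoidalCategory in
  obtain ⟨σ, hσ1, hL, hR⟩ := hA
  -- second component of σ is invariant under left multiplication
  have h2 : MonObj.mul (X := A.X) ≫ σ ≫ snd _ _ = snd _ _ ≫ σ ≫ snd _ _ := by
    rw [reassoc_of% hL]; simp
  -- first component of σ is invariant under right multiplication
  have h1 : MonObj.mul (X := A.X) ≫ σ ≫ fst _ _ = fst _ _ ≫ σ ≫ fst _ _ := by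
    rw [reassoc_of% hR]; simp
  -- specialize at the unit
  have hm1 : lift (𝟙 A.X) (toUnit A.X ≫ MonObj.one (X := A.X)) ≫ MonObj.mul (X := A.X) = 𝟙 A.X := by
    have := MonObj.mul_one A.X
    have h : lift (𝟙 A.X) (toUnit A.X ≫ MonObj.one (X := A.X)) = (ρ_ A.X).inv ≫ (A.X ◁ MonObj.one (X := A.X)) := by
      apply hom_ext <;> simp
    rw [h, Category.assoc, this]
    simp [toUnit_unique ((ρ_ A.X).inv ≫ _) (toUnit _)]
  have hm2 : lift (toUnit A.X ≫ MonObj.one (X := A.X)) (𝟙 A.X) ≫ MonObj.mul (X := A.X) = 𝟙 A.X := by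
    have := MonObj.one_mul A.X
    have h : lift (toUnit A.X ≫ MonObj.one (X := A.X)) (𝟙 A.X) = (λ_ A.X).inv ≫ (MonObj.one (X := A.X) ▷ A.X) := by
      apply hom_ext <;> simp
    rw [h, Category.assoc, this]
    simp
  have hc2 : σ ≫ snd _ _ = toUnit A.X ≫ MonObj.one (X := A.X) ≫ σ ≫ snd _ _ := by
    have := congrArg (fun f => lift (𝟙 A.X) (toUnit A.X ≫ MonObj.one (X := A.X)) ≫ f) h2
    simpa [reassoc_of% hm1] using this
  have hc1 : σ ≫ fst _ _ = toUnit A.X ≫ MonObj.one (X := A.X) ≫ σ ≫ fst _ _ := by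
    have := congrArg (fun f => lift (toUnit A.X ≫ MonObj.one (X := A.X)) (𝟙 A.X) ≫ f) h1
    simpa [reassoc_of% hm2] using this
  have hσ : σ = toUnit A.X ≫ MonObj.one (X := A.X) ≫ σ := by
    apply hom_ext
    · simpa using hc1
    · simpa using hc2
  refine ⟨MonObj.one (X := A.X), ?_, toUnit_unique _ _⟩
  calc toUnit A.X ≫ MonObj.one (X := A.X) = toUnit A.X ≫ MonObj.one (X := A.X) ≫ σ ≫ MonObj.mul (X := A.X) := by rw [hσ1]; simp
    _ = σ ≫ MonObj.mul (X := A.X) := by rw [← reassoc_of% hσ]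
    _ = 𝟙 A.X := hσ1
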